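/- If β ≤_C α in the composition poset and α//β is a horizontal composition strip, then λ(β) ⊆ λ(α) and the skew shape λ(α)/λ(β) is a horizontal strip of size |α| − |β|. -/

import Mathlib

/-! ## Partitions -/

/-- A partition: a weakly decreasing finite list of positive integers. -/
abbrev Ptn : Type := {l : List ℕ+ // l.Pairwise (· ≥ ·)}

/-- The `i`-th part (0-indexed) of a list of positive integers, `0` past the end. -/
def pget (l : List ℕ+) (i : ℕ) : ℕ := (l.map fun p => (p : ℕ)).getD i 0

/-- The size `|l|` of a list of positive integers: the sum of its parts. -/
def psum (l : List ℕ+) : ℕ := (l.map fun p => (p : ℕ)).sum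

/-- The empty partition. -/
def emptyPtn : Ptn := ⟨[], List.Pairwise.nil⟩

/-- Containment of partitions: `μ ⊆ λ` iff `μᵢ ≤ λᵢ` for all `i`. -/
def PtnSub (μ lam : Ptn) : Prop := ∀ i, pget μ.1 i ≤ pget lam.1 i

/-- `λ/μ` is a horizontal strip of size `i`: `μ ⊆ λ`, no two cells of `λ/μ` in the same
column (equivalently `λ_{i+1} ≤ μ_i` for all `i`), and `|λ| = |μ| + i`. -/
def HStrip (μ lam : Ptn) (i : ℕ) : Prop :=
  PtnSub μ lam ∧ (∀ n, pget lam.1 (n + 1) ≤ pget μ.1 n) ∧ psum lam.1 = psum μ.1 + i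

/-- The Kostka number `K_{λ,μ}`: the number of chains
`∅ = ν⁰ ⊆ ν¹ ⊆ ⋯ ⊆ νᵐ = λ` of partitions in which each `νⁱ/νⁱ⁻¹` is a horizontal strip of
size `μᵢ` (semistandard tableaux of shape `λ` and content `μ`). -/
noncomputable def Knum (lam : Ptn) (μ : List ℕ+) : ℕ :=
  Nat.card {ν : Fin (μ.length + 1) → Ptn //
    ν 0 = emptyPtn ∧ ν (Fin.last μ.length) = lam ∧
      ∀ i : Fin μ.length, HStrip (ν i.castSucc) (ν i.succ) ((μ.get i : ℕ))}

/-! ## SymA -/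

/-- `SymA = ℚ[h₁, h₂, …]`, a polynomial algebra on countably many generators. -/
abbrev SymA : Type := MvPolynomial ℕ+ ℚ

/-- The generator `hᵢ` of `SymA`. -/
noncomputable def hGen (i : ℕ+) : SymA := MvPolynomial.X i

/-- `h_λ = h_{λ₁} ⋯ h_{λ_m}`. -/
noncomputable def hL (l : List ℕ+) : SymA := (l.map hGen).prod

/-- A family `s : Ptn → SymA` with `s ∅ = 1` satisfying the Pieri rule:
`hᵢ • s_λ = Σ_μ s_μ`, the sum over partitions `μ ⊇ λ` with `μ/λ` a horizontal strip
of size `i` (for every `i ≥ 1`). -/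
def PieriFamily (s : Ptn → SymA) : Prop :=
  s emptyPtn = 1 ∧
    ∀ (i : ℕ+) (lam : Ptn),
      hGen i * s lam = ∑ᶠ μ ∈ {μ : Ptn | HStrip lam μ (i : ℕ)}, s μ

/-! ## Power series: monomial (quasi-)symmetric functions -/

/-- The ambient algebra of formal power series in countably many commuting variables
`x₀, x₁, x₂, …` (we only use elements of bounded degree). -/
abbrev PS : Type := MvPowerSeries ℕ ℚ

/-- The complete homogeneous symmetric power series of degree `i`: the sum of all
monomials of degree `i`. -/
def hPS (i : ℕ+) : PS := fun d => if (d.sum fun _ n => n) = (i : ℕ) then 1 else 0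

/-- The realization `SymA → PS` sending each generator `hᵢ` to the complete homogeneous
symmetric function of degree `i`. -/
noncomputable def realize : SymA →ₐ[ℚ] PS := MvPolynomial.aeval hPS

/-- The monomial quasi-symmetric function `M_α = Σ_{i₁<⋯<i_m} x_{i₁}^{α₁} ⋯ x_{i_m}^{α_m}`. -/
def Mqs (α : List ℕ+) : PS :=
  fun d => if (d.support.sort (· ≤ ·)).map (fun j => d j) = α.map (fun p => (p : ℕ))
    then 1 else 0

/-- The monomial symmetric function `m_λ = Σ_{α : λ(α) = λ} M_α`: the sum of all distinct
monomials whose exponent sequence rearranges to `λ`. -/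
noncomputable def mPS (lam : Ptn) : PS := ∑ᶠ α ∈ {α : List ℕ+ | α.Perm lam.1}, Mqs α

/-! ## NSym and compositions -/

/-- `NSym`, the free associative algebra on noncommuting generators `H₁, H₂, …`. -/
abbrev NSym : Type := FreeAlgebra ℚ ℕ+

/-- The generator `Hᵢ` of `NSym`. -/
def Hgen (i : ℕ+) : NSym := FreeAlgebra.ι ℚ i

/-- `H_α = H_{α₁} ⋯ H_{α_m}`. -/
def HL (α : List ℕ+) : NSym := (α.map Hgen).prod

/-- The covering relation of the composition poset: `α` is obtained from `β` either by
prepending a new part equal to `1`, or by replacing the leftmost part of `β` equal to `m`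
by `m + 1`. -/
def CCover (β α : List ℕ+) : Prop :=
  α = 1 :: β ∨
    ∃ (m : ℕ+) (l₁ l₂ : List ℕ+), β = l₁ ++ m :: l₂ ∧ α = l₁ ++ (m + 1) :: l₂ ∧ m ∉ l₁

/-- The composition poset order `≤_C`, the reflexive-transitive closure of the covering
relation. -/
def CLe : List ℕ+ → List ℕ+ → Prop := Relation.ReflTransGen CCover

/-- `(r, c)` is a cell of the skew diagram `α//β` (rows `r` and columns `c` `0`-indexed,
with the diagram of `β` placed in the lower-left corner of the diagram of `α`, i.e. row
`r ≥ ℓ(α) - ℓ(β)` of `α` is aligned with row `r - (ℓ(α) - ℓ(β))` of `β`). -/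
def stripCell (β α : List ℕ+) (r c : ℕ) : Prop :=
  r < α.length ∧ c < pget α r ∧
    (r < α.length - β.length ∨ pget β (r - (α.length - β.length)) ≤ c)

/-- `α//β` is a horizontal composition strip of size `i`: `β ≤_C α`, `|α| = |β| + i`, and
no two cells of `α//β` lie in the same column. -/
def HCStrip (β α : List ℕ+) (i : ℕ) : Prop :=
  CLe β α ∧ psum α = psum β + i ∧
    ∀ r s c, r ≠ s → stripCell β α r c → ¬ stripCell β α s c

/-- A family `S : compositions → NSym` with `S ∅ = 1` satisfying the noncommutative Pieri
rule: `Hᵢ • S_α = Σ_β S_β`, the sum over compositions `β ≥_C α` with `β//α` a horizontal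
composition strip of size `i` (for every `i ≥ 1`). -/
def NCPieriFamily (S : List ℕ+ → NSym) : Prop :=
  S [] = 1 ∧
    ∀ (i : ℕ+) (α : List ℕ+),
      Hgen i * S α = ∑ᶠ β ∈ {β : List ℕ+ | HCStrip α β (i : ℕ)}, S β

/-- `K̃_{α,β}`: the number of chains `∅ = γ⁰ ≤_C γ¹ ≤_C ⋯ ≤_C γᵐ = α` of compositions in
which each `γⁱ//γⁱ⁻¹` is a horizontal composition strip of size `βᵢ` (semistandard
composition tableaux of shape `α` and content `β`). -/
noncomputable def Ktilde (α β : List ℕ+) : ℕ :=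
  Nat.card {γ : Fin (β.length + 1) → List ℕ+ //
    γ 0 = [] ∧ γ (Fin.last β.length) = α ∧
      ∀ i : Fin β.length, HCStrip (γ i.castSucc) (γ i.succ) ((β.get i : ℕ))}

/-- The quasi-symmetric Schur function `QS_α = Σ_β K̃_{α,β} M_β`. -/
noncomputable def QSfun (α : List ℕ+) : PS := ∑ᶠ β : List ℕ+, Ktilde α β • Mqs β

/-- The forgetful map `χ : NSym → SymA`, the algebra homomorphism with `χ(Hᵢ) = hᵢ`. -/
noncomputable def chi : NSym →ₐ[ℚ] SymA := FreeAlgebra.lift ℚ hGen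

/-! ## k-bounded objects -/

/-- A partition is `k`-bounded if all of its parts are at most `k`. -/
def kBddP (k : ℕ) (lam : Ptn) : Prop := ∀ p ∈ lam.1, (p : ℕ) ≤ k

/-- A composition is `k`-bounded if all of its parts are at most `k`. -/
def kBddC (k : ℕ) (α : List ℕ+) : Prop := ∀ p ∈ α, (p : ℕ) ≤ k
lemma flatMap_coe_aux (l : List ℕ+) :
    (l.flatMap fun a => [(a : ℕ)]) = l.map (fun p : ℕ+ => (p : ℕ)) := by
  induction l with
  | nil => rfl
  | cons a l ih => exact congrArg (List.cons (a : ℕ)) ih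

lemma pget_eq (l : List ℕ+) (i : ℕ) :
    pget l i = (l.map (fun p : ℕ+ => (p : ℕ))).getD i 0 := by
  have hfm : ∀ l : List ℕ+, l.flatMap (fun a : ℕ+ => [(a : ℕ)]) = l.map (fun p : ℕ+ => (p : ℕ)) := by
    intro l; induction l <;> simp_all
  unfold pget; simp [hfm]; rfl

lemma psum_eq (l : List ℕ+) : psum l = (l.map (fun p : ℕ+ => (p : ℕ))).sum := by
  have hfm : ∀ l : List ℕ+, l.flatMap (fun a : ℕ+ => [(a : ℕ)]) = l.map (fun p : ℕ+ => (p : ℕ)) := by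
    intro l; induction l <;> simp_all
  unfold psum; simp [hfm]; rfl

lemma pget_nil (i : ℕ) : pget [] i = 0 := rfl

lemma pget_cons_zero (a : ℕ+) (l : List ℕ+) : pget (a :: l) 0 = a := rfl

lemma pget_cons_succ (a : ℕ+) (l : List ℕ+) (n : ℕ) :
    pget (a :: l) (n + 1) = pget l n := by
  rw [pget_eq, pget_eq]
  rfl

lemma pget_eq_zero_of_le (l : List ℕ+) (i : ℕ) (h : l.length ≤ i) : pget l i = 0 := by
  rw [pget_eq, List.getD_eq_default]
  rw [List.length_map]; exact h

lemma psum_perm {l₁ l₂ : List ℕ+} (h : l₁.Perm l₂) : psum l₁ = psum l₂ := by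
  rw [psum_eq, psum_eq]
  exact (h.map _).sum_eq

/-- Number of parts of `l` greater than `c` (number of cells in column `c`). -/
def cnt (l : List ℕ+) (c : ℕ) : ℕ := l.countP (fun p : ℕ+ => decide (c < (p : ℕ)))

lemma cnt_perm {l₁ l₂ : List ℕ+} (h : l₁.Perm l₂) (c : ℕ) : cnt l₁ c = cnt l₂ c :=
  h.countP_eq _

lemma cnt_eq_card (l : List ℕ+) (c : ℕ) :
    cnt l c = ((Finset.range l.length).filter (fun r => c < pget l r)).card := by
  induction l with
  | nil => simp [cnt]
  | cons a l ih =>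
    rw [List.length_cons, Finset.card_filter, Finset.sum_range_succ']
    simp only [pget_cons_succ, pget_cons_zero, ← Finset.card_filter]
    rw [cnt, List.countP_cons, ← cnt, ih]
    by_cases h : c < (a : ℕ) <;> simp [h]

lemma sorted_pget_iff (l : List ℕ+) (hl : l.Pairwise (· ≥ ·)) (c j : ℕ) :
    c < pget l j ↔ j < cnt l c := by
  induction l generalizing j with
  | nil => simp [cnt, pget_nil]
  | cons a l ih =>
    rw [List.pairwise_cons] at hl
    by_cases h : c < (a : ℕ)
    · have hc : cnt (a :: l) c = cnt l c + 1 := by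
        rw [cnt, List.countP_cons]; simp [h, cnt]
      cases j with
      | zero => simpa [pget_cons_zero, hc] using h
      | succ j => simp [pget_cons_succ, hc, ih hl.2]
    · have hz : cnt l c = 0 := by
        rw [cnt, List.countP_eq_zero]
        intro p hp
        simp only [decide_eq_true_eq, not_lt]
        calc (p : ℕ) ≤ (a : ℕ) := by exact_mod_cast hl.1 p hp
          _ ≤ c := not_lt.mp h
      have hc : cnt (a :: l) c = 0 := by
        rw [cnt, List.countP_cons, ← cnt, hz]; simp [h]
      cases j with
      | zero => simp [pget_cons_zero, hc, h]
      | succ j =>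
        rw [pget_cons_succ, hc, ih hl.2, hz]
        omega

lemma pget_append_mono (l₁ : List ℕ+) (m : ℕ+) (l₂ : List ℕ+) (k : ℕ) :
    pget (l₁ ++ m :: l₂) k ≤ pget (l₁ ++ (m + 1) :: l₂) k := by
  induction l₁ generalizing k with
  | nil =>
    cases k with
    | zero =>
      rw [List.nil_append, List.nil_append, pget_cons_zero, pget_cons_zero]
      exact_mod_cast le_of_lt (PNat.lt_add_one_iff.mpr le_rfl)
    | succ k => rw [List.nil_append, List.nil_append, pget_cons_succ, pget_cons_succ]
  | cons a l₁ ih =>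
    cases k with
    | zero => rw [List.cons_append, List.cons_append, pget_cons_zero, pget_cons_zero]
    | succ k =>
      rw [List.cons_append, List.cons_append, pget_cons_succ, pget_cons_succ]
      exact ih k

lemma cle_facts {β α : List ℕ+} (h : CLe β α) :
    β.length ≤ α.length ∧ ∀ j, pget β j ≤ pget α (j + (α.length - β.length)) := by
  induction h with
  | refl => simp
  | @tail γ α hbg hc ih =>
    obtain ⟨hlen, hget⟩ := ih
    rcases hc with h1 | ⟨m, l₁, l₂, hγ, hα, _⟩
    · subst h1
      refine ⟨by simpa using Nat.le_succ_of_le hlen, fun j => ?_⟩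
      have hs : (1 :: γ).length - β.length = (γ.length - β.length) + 1 := by
        simp only [List.length_cons]; omega
      rw [hs, ← Nat.add_assoc, pget_cons_succ]
      exact hget j
    · subst hγ; subst hα
      have hl : (l₁ ++ (m + 1) :: l₂).length = (l₁ ++ m :: l₂).length := by simp
      refine ⟨by omega, fun j => ?_⟩
      rw [hl]
      exact le_trans (hget j) (pget_append_mono l₁ m l₂ _)

lemma cnt_le_of_counts {β α : List ℕ+} (c : ℕ)
    (hlen : β.length ≤ α.length)
    (hget : ∀ j, pget β j ≤ pget α (j + (α.length - β.length)))
    (hcol : ∀ r s c', r ≠ s → stripCell β α r c' → ¬ stripCell β α s c') :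
    cnt β c ≤ cnt α c ∧ cnt α c ≤ cnt β c + 1 := by
  classical
  set s := α.length - β.length with hs
  set A : Finset ℕ := (Finset.range α.length).filter (fun r => c < pget α r) with hA
  set B : Finset ℕ := (Finset.range β.length).filter (fun j => c < pget β j) with hB
  have hAc : cnt α c = A.card := cnt_eq_card α c
  have hBc : cnt β c = B.card := cnt_eq_card β c
  have hinj : Function.Injective (fun j : ℕ => j + s) := add_left_injective s
  have hsub : B.image (fun j => j + s) ⊆ A := by
    intro r hr
    simp only [Finset.mem_image] at hr
    obtain ⟨j, hj, rfl⟩ := hr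
    simp only [hB, Finset.mem_filter, Finset.mem_range] at hj
    simp only [hA, Finset.mem_filter, Finset.mem_range]
    exact ⟨by omega, lt_of_lt_of_le hj.2 (hget j)⟩
  have hcard : (B.image (fun j => j + s)).card = B.card :=
    Finset.card_image_of_injective _ hinj
  constructor
  · rw [hAc, hBc, ← hcard]
    exact Finset.card_le_card hsub
  · have hstrip : ∀ r ∈ A \ B.image (fun j => j + s), stripCell β α r c := by
      intro r hr
      rw [Finset.mem_sdiff] at hr
      obtain ⟨hrA, hrB⟩ := hr
      simp only [hA, Finset.mem_filter, Finset.mem_range] at hrA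
      refine ⟨hrA.1, hrA.2, ?_⟩
      by_cases hrs : r < s
      · exact Or.inl hrs
      · right
        have hj : (r - s) + s = r := by omega
        by_cases hjl : r - s < β.length
        · by_contra hle
          push_neg at hle
          exact hrB (Finset.mem_image.mpr ⟨r - s, by
            simp only [hB, Finset.mem_filter, Finset.mem_range]
            exact ⟨hjl, hle⟩, hj⟩)
        · rw [pget_eq_zero_of_le β _ (by omega)]
          exact Nat.zero_le c
    have hone : (A \ B.image (fun j => j + s)).card ≤ 1 := by
      rw [Finset.card_le_one]
      intro r hr r' hr'
      by_contra hne
      exact hcol r r' c hne (hstrip r hr) (hstrip r' hr')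
    calc cnt α c = A.card := hAc
      _ ≤ (A \ B.image (fun j => j + s)).card + (B.image (fun j => j + s)).card :=
          Finset.card_le_card_sdiff_add_card
      _ ≤ 1 + B.card := by rw [hcard]; omega
      _ = cnt β c + 1 := by rw [hBc]; omega

/-- If `β ≤_C α` in the composition poset and `α//β` is a horizontal
composition strip (of size `i = |α| - |β|`), then `λ(β) ⊆ λ(α)` and the skew shape
`λ(α)/λ(β)` is a horizontal strip of size `|α| - |β|`. -/
theorem hcstrip_implies_hstrip (β α : List ℕ+) (i : ℕ) (h : HCStrip β α i)
    (lb la : Ptn) (hβ : lb.1.Perm β) (hα : la.1.Perm α) :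
    HStrip lb la i := by
  obtain ⟨hcle, hsum, hcol⟩ := h
  obtain ⟨hlen, hget⟩ := cle_facts hcle
  have hcnt : ∀ c, cnt lb.1 c ≤ cnt la.1 c ∧ cnt la.1 c ≤ cnt lb.1 c + 1 := by
    intro c
    rw [cnt_perm hβ, cnt_perm hα]
    exact cnt_le_of_counts c hlen hget hcol
  refine ⟨?_, ?_, ?_⟩
  · intro j
    by_contra hlt
    push_neg at hlt
    have h2 := (sorted_pget_iff lb.1 lb.2 (pget la.1 j) j).mp hlt
    have h3 := lt_of_lt_of_le h2 (hcnt (pget la.1 j)).1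
    exact lt_irrefl _ ((sorted_pget_iff la.1 la.2 (pget la.1 j) j).mpr h3)
  · intro n
    by_contra hlt
    push_neg at hlt
    have h2 := (sorted_pget_iff la.1 la.2 (pget lb.1 n) (n + 1)).mp hlt
    have h3 : n < cnt lb.1 (pget lb.1 n) := by
      have := (hcnt (pget lb.1 n)).2
      omega
    exact lt_irrefl _ ((sorted_pget_iff lb.1 lb.2 (pget lb.1 n) n).mpr h3)
  · rw [psum_perm hβ, psum_perm hα, hsum]
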